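/- Let (V,g) be a finite-dimensional real vector space with a nondegenerate symmetric bilinear form, and let A be a symmetric bilinear form on V of rank 2. Then (A² − tr(A)·A) ∧ (A² − tr(A)·A) = −(1/2)(tr(A²) − tr(A)²)·(A ∧ A). -/

import Mathlib

variable {V : Type*} [AddCommGroup V] [Module ℝ V]

/-- Kulkarni–Nomizu product of two (0,2)-tensors. -/
def kn (A B : V → V → ℝ) : V → V → V → V → ℝ := fun x1 x2 x3 x4 =>
  A x1 x4 * B x2 x3 + A x2 x3 * B x1 x4 - A x1 x3 * B x2 x4 - A x2 x4 * B x1 x3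

/-- The endomorphism `(X ∧_A Y)Z = A(Y,Z)X − A(X,Z)Y`. -/
def wedgeV (A : V → V → ℝ) (x y z : V) : V := A y z • x - A x z • y

/-- Tachibana tensor `Q(A,T)` of a (0,2)-tensor `A` and a (0,4)-tensor `T`. -/
def Q4 (A : V → V → ℝ) (T : V → V → V → V → ℝ) : V → V → V → V → V → V → ℝ :=
  fun x1 x2 x3 x4 x y =>
    -(T (wedgeV A x y x1) x2 x3 x4) - T x1 (wedgeV A x y x2) x3 x4
      - T x1 x2 (wedgeV A x y x3) x4 - T x1 x2 x3 (wedgeV A x y x4)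

/-- Trace of a rank-one map `x ↦ f x • v` is `f v`. -/
lemma trace_smulRight' {V : Type*} [AddCommGroup V] [Module ℝ V] [FiniteDimensional ℝ V]
    (f : V →ₗ[ℝ] ℝ) (v : V) :
    LinearMap.trace ℝ V (LinearMap.smulRight f v) = f v := by
  have h : LinearMap.smulRight f v = (LinearMap.toSpanSingleton ℝ V v) ∘ₗ f := by
    ext x; simp [LinearMap.toSpanSingleton, LinearMap.smulRight]
  rw [h, LinearMap.trace_comp_comm']
  have h2 : f ∘ₗ LinearMap.toSpanSingleton ℝ V v = f v • LinearMap.id := by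
    ext c; simp [LinearMap.toSpanSingleton, mul_comm]
  rw [h2]
  simp [LinearMap.trace_id]

/-- if `rank A = 2` then
`(A² − tr(A)·A) ∧ (A² − tr(A)·A) = −(1/2)(tr(A²) − tr(A)²)·(A ∧ A)`. -/
theorem stmt_6 {V : Type*} [AddCommGroup V] [Module ℝ V] [FiniteDimensional ℝ V]
    (g A : V →ₗ[ℝ] V →ₗ[ℝ] ℝ)
    (hg : ∀ x y, g x y = g y x)
    (hgnd : ∀ x : V, (∀ y : V, g x y = 0) → x = 0)
    (hA : ∀ x y, A x y = A y x)
    (a : V →ₗ[ℝ] V) (ha : ∀ x y, g (a x) y = A x y)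
    (hrank : Module.finrank ℝ (LinearMap.range a) = 2) :
    ∀ x₁ x₂ x₃ x₄ : V,
      kn (fun u v => A (a u) v - LinearMap.trace ℝ V a * A u v)
         (fun u v => A (a u) v - LinearMap.trace ℝ V a * A u v) x₁ x₂ x₃ x₄
        = -(1/2 : ℝ) * (LinearMap.trace ℝ V (a ∘ₗ a) - (LinearMap.trace ℝ V a) ^ 2)
            * kn (fun u v => A u v) (fun u v => A u v) x₁ x₂ x₃ x₄ := by
  classical
  set W := LinearMap.range a with hW
  let e : Module.Basis (Fin 2) ℝ W := Module.finBasisOfFinrankEq ℝ W hrank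
  set α : V →ₗ[ℝ] ℝ := (e.coord 0) ∘ₗ a.rangeRestrict with hα
  set β : V →ₗ[ℝ] ℝ := (e.coord 1) ∘ₗ a.rangeRestrict with hβ
  set e1 : V := (e 0 : V) with he1
  set e2 : V := (e 1 : V) with he2
  -- decomposition of a x
  have hax : ∀ x : V, a x = α x • e1 + β x • e2 := by
    intro x
    have h := e.sum_repr (a.rangeRestrict x)
    rw [Fin.sum_univ_two] at h
    have := congrArg (Subtype.val : W → V) h
    simpa [hα, hβ, Module.Basis.coord_apply] using this.symm
  -- constants
  set p : ℝ := α e1 with hp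
  set q : ℝ := α e2 with hq
  set r : ℝ := β e1 with hr
  set s : ℝ := β e2 with hs
  have hαa : ∀ x : V, α (a x) = p * α x + q * β x := by
    intro x
    rw [hax x, map_add, map_smul, map_smul, smul_eq_mul, smul_eq_mul]
    ring
  have hβa : ∀ x : V, β (a x) = r * α x + s * β x := by
    intro x
    rw [hax x, map_add, map_smul, map_smul, smul_eq_mul, smul_eq_mul]
    ring
  -- a as a sum of rank-one maps
  have hasum : a = LinearMap.smulRight α e1 + LinearMap.smulRight β e2 := by
    ext x; simp [hax x]
  have htr : LinearMap.trace ℝ V a = p + s := by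
    rw [hasum, map_add, trace_smulRight', trace_smulRight']
  have haasum : a ∘ₗ a = LinearMap.smulRight α (a e1) + LinearMap.smulRight β (a e2) := by
    ext x
    simp only [LinearMap.comp_apply, LinearMap.add_apply, LinearMap.smulRight_apply]
    rw [hax x, map_add, map_smul, map_smul]
  have htr2 : LinearMap.trace ℝ V (a ∘ₗ a) = p * p + q * r + (r * q + s * s) := by
    rw [haasum, map_add, trace_smulRight', trace_smulRight', hαa, hβa]
  -- A in coordinates
  have hAc : ∀ u v : V, A u v = α u * g e1 v + β u * g e2 v := by
    intro u v
    rw [← ha, hax u, map_add, map_smul, map_smul]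
    simp
  intro x₁ x₂ x₃ x₄
  simp only [kn, htr, htr2, hAc, hαa, hβa]
  ring
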